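/- Let (Z_n) be a discrete-time Markov chain on a measurable state space E∪{∂} with ∂∉E absorbing, let K⊆E be measurable, let θ₂∈(0,1) and let n ≥ 1 be such that θ₂^{-n}ℙ_z(Z_n∈K) ≥ 1 for all z∈K. Define φ₂(z) = (∑_{k=0}^{n-1}θ₂^{-k})^{-1} · ∑_{k=0}^{n-1} θ₂^{-k} ℙ_z(Z_k∈K) for z∈E. Then inf_{z∈K} φ₂(z) > 0, sup_{z∈E} φ₂(z) ≤ 1, and E_z(φ₂(Z_1)1_{Z_1≠∂}) ≥ θ₂ φ₂(z) for all z∈E. -/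

import Mathlib

open MeasureTheory Filter Topology ProbabilityTheory
open scoped ENNReal NNReal

namespace MChain

variable {α : Type*}

/-- Law of `Z_n` for the Markov chain with one-step transition kernel `step`, started at `x`. -/
noncomputable def lawn [MeasurableSpace α] (step : Kernel α α) : ℕ → α → Measure α
  | 0, x => Measure.dirac x
  | (n + 1), x => (lawn step n x).bind fun y => step y

/-- The exponential convergence parameter
`θ₀ = sup_{z ∈ E} sup {θ > 0 : liminf θ^{-n} ℙ_z(Z_n ≠ ∂) > 0}`. -/
noncomputable def theta0 [MeasurableSpace α] (step : Kernel α α) (dead : α) : ℝ :=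
  sSup {θ : ℝ | 0 < θ ∧ ∃ z : α, z ≠ dead ∧
    0 < atTop.liminf fun n : ℕ => (lawn step n z {x | x ≠ dead}).toReal / θ ^ n}

noncomputable def stepPow [MeasurableSpace α] (step : Kernel α α) : ℕ → Kernel α α
  | 0 => Kernel.id
  | (n+1) => step ∘ₖ stepPow step n

instance [MeasurableSpace α] (step : Kernel α α) [IsMarkovKernel step] (n : ℕ) :
    IsMarkovKernel (stepPow step n) := by
  induction n with
  | zero => exact inferInstanceAs (IsMarkovKernel Kernel.id)
  | succ k ih => exact inferInstanceAs (IsMarkovKernel (step ∘ₖ stepPow step k))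

lemma lawn_eq_stepPow [MeasurableSpace α] (step : Kernel α α) [IsMarkovKernel step]
    (n : ℕ) (x : α) : lawn step n x = stepPow step n x := by
  induction n with
  | zero => simp [lawn, stepPow, Kernel.id_apply]
  | succ k ih =>
      rw [lawn, ih, stepPow, Kernel.comp_apply]

instance [MeasurableSpace α] (step : Kernel α α) [IsMarkovKernel step] (n : ℕ) (x : α) :
    IsProbabilityMeasure (lawn step n x) := by
  rw [lawn_eq_stepPow]; infer_instance

lemma stepPow_succ' [MeasurableSpace α] (step : Kernel α α) [IsMarkovKernel step] (n : ℕ) :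
    stepPow step (n+1) = stepPow step n ∘ₖ step := by
  induction n with
  | zero =>
      show step ∘ₖ Kernel.id = Kernel.id ∘ₖ step
      rw [Kernel.comp_id, Kernel.id_comp]
  | succ k ih =>
      calc stepPow step (k+2) = step ∘ₖ stepPow step (k+1) := rfl
        _ = step ∘ₖ (stepPow step k ∘ₖ step) := by rw [ih]
        _ = (step ∘ₖ stepPow step k) ∘ₖ step := (Kernel.comp_assoc _ _ _).symm
        _ = stepPow step (k+1) ∘ₖ step := rfl

lemma lawn_succ' [MeasurableSpace α] (step : Kernel α α) [IsMarkovKernel step]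
    (k : ℕ) (z : α) {K : Set α} (hK : MeasurableSet K) :
    lawn step (k+1) z K = ∫⁻ y, lawn step k y K ∂ step z := by
  rw [lawn_eq_stepPow, stepPow_succ', Kernel.comp_apply' _ _ _ hK]
  simp_rw [lawn_eq_stepPow]

lemma lawn_measurable [MeasurableSpace α] (step : Kernel α α) [IsMarkovKernel step]
    (k : ℕ) {K : Set α} (hK : MeasurableSet K) :
    Measurable fun y => lawn step k y K := by
  simp_rw [lawn_eq_stepPow]
  exact Kernel.measurable_coe _ hK

lemma lawn_dead [MeasurableSpace α] (step : Kernel α α) [IsMarkovKernel step]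
    {dead : α} (habs : step dead = Measure.dirac dead) (k : ℕ) :
    lawn step k dead = Measure.dirac dead := by
  induction k with
  | zero => rfl
  | succ m ih =>
      rw [lawn, ih, Measure.dirac_bind (Kernel.measurable step), habs]


/-- **Step 2 of the proof of Proposition (E2') ⇒ (E2).** If `θ₂^{-n} ℙ_z(Z_n ∈ K) ≥ 1` on
`K` for some `n ≥ 1`, then
`φ₂(z) = (∑_{k<n} θ₂^{-k})^{-1} ∑_{k<n} θ₂^{-k} ℙ_z(Z_k ∈ K)` satisfies `inf_K φ₂ > 0`,
`sup_E φ₂ ≤ 1` and `E_z(φ₂(Z₁) 1_{Z₁ ≠ ∂}) ≥ θ₂ φ₂(z)` for all `z ∈ E`. -/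
theorem phi2_properties
    [MeasurableSpace α] (step : Kernel α α) [IsMarkovKernel step] (dead : α)
    (habs : step dead = Measure.dirac dead)
    (K : Set α) (hKmeas : MeasurableSet K) (hKE : dead ∉ K)
    (θ₂ : ℝ) (hθ₂0 : 0 < θ₂) (hθ₂1 : θ₂ < 1) (n : ℕ) (hn : 1 ≤ n)
    (hhit : ∀ z ∈ K, ENNReal.ofReal (θ₂ ^ n) ≤ lawn step n z K) :
    ∀ φ₂ : α → ℝ,
      φ₂ = (fun z => (∑ k ∈ Finset.range n, θ₂⁻¹ ^ k)⁻¹ *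
        ∑ k ∈ Finset.range n, θ₂⁻¹ ^ k * (lawn step k z K).toReal) →
      (∃ ε : ℝ, 0 < ε ∧ ∀ z ∈ K, ε ≤ φ₂ z) ∧
      (∀ z : α, φ₂ z ≤ 1) ∧
      ∀ z : α, z ≠ dead →
        ENNReal.ofReal (θ₂ * φ₂ z) ≤
          ∫⁻ y in {x : α | x ≠ dead}, ENNReal.ofReal (φ₂ y) ∂(step z) := by
  intro φ₂ hφ
  have hθi : (0:ℝ) < θ₂⁻¹ := inv_pos.2 hθ₂0
  set S : ℝ := ∑ k ∈ Finset.range n, θ₂⁻¹ ^ k with hSdef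
  have hS1 : (1:ℝ) ≤ S := by
    have h0 : (0:ℕ) ∈ Finset.range n := Finset.mem_range.2 hn
    calc (1:ℝ) = θ₂⁻¹ ^ 0 := by norm_num
      _ ≤ S := Finset.single_le_sum (fun k _ => by positivity) h0
  have hS0 : (0:ℝ) < S := lt_of_lt_of_le one_pos hS1
  have hm_le1 : ∀ (k : ℕ) (z : α), (lawn step k z K).toReal ≤ 1 := fun k z =>
    ENNReal.toReal_le_of_le_ofReal zero_le_one (by simpa using prob_le_one)
  have hm_nonneg : ∀ (k : ℕ) (z : α), 0 ≤ (lawn step k z K).toReal :=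
    fun k z => ENNReal.toReal_nonneg
  refine ⟨⟨S⁻¹, inv_pos.2 hS0, fun z hz => ?_⟩, fun z => ?_, fun z hz => ?_⟩
  · -- lower bound on K
    simp only [hφ]
    have h1 : (1:ℝ) ≤ ∑ k ∈ Finset.range n, θ₂⁻¹ ^ k * (lawn step k z K).toReal := by
      have h0 : (0:ℕ) ∈ Finset.range n := Finset.mem_range.2 hn
      have hterm : θ₂⁻¹ ^ 0 * (lawn step 0 z K).toReal = 1 := by
        show θ₂⁻¹ ^ 0 * (Measure.dirac z K).toReal = 1
        rw [Measure.dirac_apply_of_mem hz]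
        norm_num
      calc (1:ℝ) = θ₂⁻¹ ^ 0 * (lawn step 0 z K).toReal := hterm.symm
        _ ≤ _ := Finset.single_le_sum
              (fun k _ => mul_nonneg (by positivity) (hm_nonneg k z)) h0
    calc S⁻¹ = S⁻¹ * 1 := (mul_one _).symm
      _ ≤ _ := by
          exact mul_le_mul_of_nonneg_left h1 (inv_nonneg.2 hS0.le)
  · -- upper bound
    simp only [hφ]
    have h1 : ∑ k ∈ Finset.range n, θ₂⁻¹ ^ k * (lawn step k z K).toReal ≤ S := by
      rw [hSdef]
      refine Finset.sum_le_sum fun k _ => ?_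
      calc θ₂⁻¹ ^ k * (lawn step k z K).toReal ≤ θ₂⁻¹ ^ k * 1 :=
            mul_le_mul_of_nonneg_left (hm_le1 k z) (by positivity)
        _ = θ₂⁻¹ ^ k := mul_one _
    calc S⁻¹ * ∑ k ∈ Finset.range n, θ₂⁻¹ ^ k * (lawn step k z K).toReal
        ≤ S⁻¹ * S := mul_le_mul_of_nonneg_left h1 (inv_nonneg.2 hS0.le)
      _ = 1 := inv_mul_cancel₀ hS0.ne'
  · -- drift inequality
    have hφ_nonneg : ∀ y, 0 ≤ φ₂ y := fun y => by
      simp only [hφ]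
      exact mul_nonneg (inv_nonneg.2 hS0.le)
        (Finset.sum_nonneg fun k _ => mul_nonneg (by positivity) (hm_nonneg k y))
    set T := ENNReal.ofReal θ₂ with hTdef
    have hT0 : T ≠ 0 := by simp [hTdef, ENNReal.ofReal_pos.2 hθ₂0, ne_of_gt]
    have hTtop : T ≠ ⊤ := ENNReal.ofReal_ne_top
    set u : ℝ≥0∞ := T⁻¹ with hudef
    have hutop : u ≠ ⊤ := by simp [hudef, ENNReal.inv_ne_top, hT0]
    have hTu : T * u = 1 := ENNReal.mul_inv_cancel hT0 hTtop
    have hofReal_pow : ∀ k : ℕ, ENNReal.ofReal (θ₂⁻¹ ^ k) = u ^ k := fun k => by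
      rw [ENNReal.ofReal_pow hθi.le, ENNReal.ofReal_inv_of_pos hθ₂0, hudef, hTdef]
    -- key pointwise identity
    have key : ∀ y : α, ENNReal.ofReal (φ₂ y)
        = ENNReal.ofReal S⁻¹ * ∑ k ∈ Finset.range n, u ^ k * lawn step k y K := by
      intro y
      simp only [hφ]
      rw [ENNReal.ofReal_mul (inv_nonneg.2 hS0.le)]
      congr 1
      rw [ENNReal.ofReal_sum_of_nonneg
        (fun k _ => mul_nonneg (by positivity) (hm_nonneg k y))]
      refine Finset.sum_congr rfl fun k _ => ?_
      rw [ENNReal.ofReal_mul (by positivity), ENNReal.ofReal_toReal (measure_ne_top _ _),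
        hofReal_pow]
    -- the support condition
    have hdead : ENNReal.ofReal (φ₂ dead) = 0 := by
      have : φ₂ dead = 0 := by
        simp only [hφ]
        have : ∀ k ∈ Finset.range n, θ₂⁻¹ ^ k * (lawn step k dead K).toReal = 0 := by
          intro k _
          rw [lawn_dead step habs, Measure.dirac_apply' _ hKmeas]
          simp [hKE]
        rw [Finset.sum_congr rfl this]
        simp
      simp [this]
    have hsupp : Function.support (fun y => ENNReal.ofReal (φ₂ y)) ⊆ {x : α | x ≠ dead} := by
      intro y hy
      simp only [Set.mem_setOf_eq]
      rintro rfl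
      exact hy hdead
    rw [setLIntegral_eq_of_support_subset hsupp]
    -- compute the full integral
    have hcal : ∫⁻ y, ENNReal.ofReal (φ₂ y) ∂ step z
        = ENNReal.ofReal S⁻¹ * ∑ k ∈ Finset.range n, u ^ k * lawn step (k+1) z K := by
      simp_rw [key]
      rw [lintegral_const_mul' _ _ ENNReal.ofReal_ne_top]
      congr 1
      rw [lintegral_finset_sum _ (fun k _ => (lawn_measurable step k hKmeas).const_mul _)]
      refine Finset.sum_congr rfl fun k _ => ?_
      rw [lintegral_const_mul' _ _ (ENNReal.pow_ne_top hutop), lawn_succ' step k z hKmeas]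
    rw [hcal]
    -- LHS
    rw [ENNReal.ofReal_mul hθ₂0.le, key z, ← hTdef]
    set M : ℕ → ℝ≥0∞ := fun j => lawn step j z K with hMdef
    have hMtop : ∀ j, M j ≠ ⊤ := fun j => measure_ne_top _ _
    set A : ℝ≥0∞ := ∑ k ∈ Finset.range n, u ^ k * M k with hAdef
    set B : ℝ≥0∞ := ∑ k ∈ Finset.range n, u ^ (k+1) * M (k+1) with hBdef
    have hM0 : M 0 ≤ u ^ n * M n := by
      by_cases hzK : z ∈ K
      · have h0 : M 0 = 1 := by
          show (Measure.dirac z) K = 1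
          exact Measure.dirac_apply_of_mem hzK
        rw [h0]
        calc (1:ℝ≥0∞) = u ^ n * ENNReal.ofReal (θ₂ ^ n) := by
              rw [ENNReal.ofReal_pow hθ₂0.le, ← hTdef, ← mul_pow, hudef,
                ENNReal.inv_mul_cancel hT0 hTtop, one_pow]
          _ ≤ u ^ n * M n := mul_le_mul_right (hhit z hzK) _
      · have h0 : M 0 = 0 := by
          show (Measure.dirac z) K = 0
          rw [Measure.dirac_apply' _ hKmeas]
          simp [hzK]
        simp [h0]
    have hAB : A ≤ B := by
      have h1 : A + u ^ n * M n = B + M 0 := by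
        have e1 : A + u ^ n * M n = ∑ k ∈ Finset.range (n+1), u ^ k * M k :=
          (Finset.sum_range_succ _ n).symm
        have e2 : ∑ k ∈ Finset.range (n+1), u ^ k * M k = B + u ^ 0 * M 0 :=
          Finset.sum_range_succ' _ n
        rw [e1, e2, pow_zero, one_mul]
      have hfin : u ^ n * M n ≠ ⊤ :=
        ENNReal.mul_ne_top (ENNReal.pow_ne_top hutop) (hMtop n)
      have h2 : A + u ^ n * M n ≤ B + u ^ n * M n := by
        rw [h1]
        exact add_le_add_right hM0 B
      exact (ENNReal.add_le_add_iff_right hfin).1 h2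
    have hTB : T * B = ∑ k ∈ Finset.range n, u ^ k * M (k+1) := by
      rw [hBdef, Finset.mul_sum]
      refine Finset.sum_congr rfl fun k _ => ?_
      calc T * (u ^ (k+1) * M (k+1)) = (T * u) * (u ^ k * M (k+1)) := by ring
        _ = u ^ k * M (k+1) := by rw [hTu, one_mul]
    calc T * (ENNReal.ofReal S⁻¹ * A) = ENNReal.ofReal S⁻¹ * (T * A) := by ring
      _ ≤ ENNReal.ofReal S⁻¹ * (T * B) := by
          exact mul_le_mul_right (mul_le_mul_right hAB T) _
      _ = ENNReal.ofReal S⁻¹ * ∑ k ∈ Finset.range n, u ^ k * M (k+1) := by rw [hTB]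

end MChain
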